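/- The matrix A, regarded as a matrix with real entries, has at least two distinct real eigenvalues that are strictly greater than 1; that is, there exist real numbers λ ≠ μ with λ > 1 and μ > 1 and nonzero vectors v, w ∈ ℝ^{2n+1} such that A·v = λ·v and A·w = μ·w. Consequently the product of the two largest eigenvalues of A is strictly greater than 1 (in particular, it is different from 1). -/

import Mathlib

open Finset

/-- Sum over the nonzero indices of `Fin (N+1)` equals a sum over `Icc 2 (N+1)`. -/
lemma stmt2_conv_sum (N : ℕ) (F : ℕ → ℝ) :
    ∑ i ∈ (univ : Finset (Fin (N+1))).erase 0, F (i.val + 1) = ∑ k ∈ Icc 2 (N+1), F k := by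
  rw [Finset.sum_erase_eq_sub (mem_univ 0), Fin.sum_univ_eq_sum_range (fun k => F (k+1)),
    Finset.sum_range_succ' (fun k => F (k+1)) N]
  have : Icc 2 (N+1) = Ico 2 (N+2) := by rw [← Finset.Ico_add_one_right_eq_Icc]; rfl
  rw [this, Finset.sum_Ico_eq_sum_range]
  simp [add_comm 2]

/-- Two roots of the secular equation of the arrowhead matrix, one above `D N`
and one strictly between `D (N-1)` and `D N`. -/
lemma stmt2_aux_roots (N : ℕ) (hN : 3 ≤ N) (D : ℕ → ℝ)
    (h2 : ∀ k, 2 ≤ k → k ≤ N → 2 ≤ D k)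
    (hmono : ∀ j k, 2 ≤ j → j < k → k ≤ N → D j < D k)
    (hgap : D (N-1) + 1 ≤ D N) :
    ∃ lam mu : ℝ,
      D N < lam ∧ D (N-1) < mu ∧ mu < D N ∧
      1 + ∑ k ∈ Icc 2 N, (lam - D k)⁻¹ = lam ∧
      1 + ∑ k ∈ Icc 2 N, (mu - D k)⁻¹ = mu := by
  have hNR : (3:ℝ) ≤ (N:ℝ) := by exact_mod_cast hN
  set g : ℝ → ℝ := fun x => 1 + ∑ k ∈ Icc 2 N, (x - D k)⁻¹ - x with hgdef
  have hDN : 2 ≤ D N := h2 N (by omega) le_rfl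
  have hDN1 : 2 ≤ D (N-1) := h2 (N-1) (by omega) (by omega)
  have hDle : ∀ k ∈ Icc 2 N, D k ≤ D N := by
    intro k hk
    simp only [mem_Icc] at hk
    rcases eq_or_lt_of_le hk.2 with h | h
    · rw [h]
    · exact (hmono k N hk.1 h le_rfl).le
  have hDle1 : ∀ k, 2 ≤ k → k ≤ N - 1 → D k ≤ D (N-1) := by
    intro k hk2 hk
    rcases eq_or_lt_of_le hk with h | h
    · rw [h]
    · exact (hmono k (N-1) hk2 h (by omega)).le
  have hcont : ∀ s : Set ℝ, (∀ x ∈ s, ∀ k ∈ Icc 2 N, x - D k ≠ 0) → ContinuousOn g s := by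
    intro s hs
    apply ContinuousOn.sub _ continuousOn_id
    apply ContinuousOn.add continuousOn_const
    apply continuousOn_finset_sum
    intro k hk
    exact ((continuousOn_id.sub continuousOn_const).inv₀ (fun x hx => hs x hx k hk))
  -- first root
  have hDNpos : (0:ℝ) < D N := by linarith
  have hinv : (0:ℝ) < (D N)⁻¹ := inv_pos.mpr hDNpos
  set a : ℝ := D N + (D N)⁻¹ with ha
  set b : ℝ := D N + N with hb
  have hab : a ≤ b := by
    have : (D N)⁻¹ ≤ 1 := by
      rw [inv_le_one_iff₀]; right; linarith
    simp only [ha, hb]; linarith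
  have hpos1 : ∀ x ∈ Set.Icc a b, ∀ k ∈ Icc 2 N, 0 < x - D k := by
    intro x hx k hk
    have := hDle k hk
    have := hx.1
    simp only [ha] at this
    linarith
  have hga : 0 < g a := by
    have hsum : (a - D N)⁻¹ ≤ ∑ k ∈ Icc 2 N, (a - D k)⁻¹ := by
      apply Finset.single_le_sum (f := fun k => (a - D k)⁻¹)
      · intro k hk
        exact (inv_pos.mpr (hpos1 a (Set.left_mem_Icc.mpr hab) k hk)).le
      · simp only [mem_Icc]; omega
    have h1 : a - D N = (D N)⁻¹ := by simp [ha]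
    rw [h1, inv_inv] at hsum
    have h3 : (D N)⁻¹ ≤ 1/2 := by
      rw [inv_le_iff_one_le_mul₀ hDNpos]
      linarith
    simp only [hgdef, ha]
    linarith
  have hgb : g b < 0 := by
    have hsum : ∑ k ∈ Icc 2 N, (b - D k)⁻¹ ≤ (Icc 2 N).card • (1:ℝ) := by
      apply Finset.sum_le_card_nsmul
      intro k hk
      have h1 : (1:ℝ) ≤ b - D k := by
        have := hDle k hk; simp only [hb]; linarith
      rw [inv_le_one_iff₀]; right; linarith
    have hcard : ((Icc 2 N).card : ℝ) = (N:ℝ) - 1 := by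
      rw [Nat.card_Icc]
      have : N + 1 - 2 = N - 1 := by omega
      rw [this]
      have : (1:ℕ) ≤ N := by omega
      push_cast [this]
      ring
    rw [nsmul_eq_mul, mul_one, hcard] at hsum
    simp only [hgdef, hb]
    linarith
  obtain ⟨lam, hlamMem, hglam⟩ := intermediate_value_Icc' hab
    (hcont _ (fun x hx k hk => (hpos1 x hx k hk).ne'))
    (Set.mem_Icc.mpr ⟨hgb.le, hga.le⟩)
  -- second root
  set e : ℝ := (2 + D (N-1))⁻¹ with he
  have hepos : 0 < e := by rw [he]; positivity
  have hele : e ≤ 1/4 := by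
    rw [he]
    rw [inv_le_iff_one_le_mul₀ (by linarith)]
    linarith
  set δ : ℝ := (4*(N:ℝ))⁻¹ with hδ
  have hδpos : 0 < δ := by rw [hδ]; positivity
  have hδle : δ ≤ 1/12 := by
    rw [hδ, inv_le_iff_one_le_mul₀ (by linarith)]
    linarith
  set a' : ℝ := D (N-1) + e with ha'
  set b' : ℝ := D N - δ with hb'
  have hab' : a' ≤ b' := by simp only [ha', hb']; linarith
  have hsplit : ∀ F : ℕ → ℝ, ∑ k ∈ Icc 2 N, F k = ∑ k ∈ Icc 2 (N-1), F k + F N := by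
    intro F
    have h1 : N = (N-1) + 1 := by omega
    rw [h1, Finset.sum_Icc_succ_top (by omega)]
    have h2 : N - 1 + 1 - 1 = N - 1 := by omega
    rw [h2]
  have hposk : ∀ x ∈ Set.Icc a' b', ∀ k, 2 ≤ k → k ≤ N - 1 → 0 < x - D k := by
    intro x hx k hk2 hk
    have := hDle1 k hk2 hk
    have := hx.1
    simp only [ha'] at this
    linarith
  have hnegN : ∀ x ∈ Set.Icc a' b', x - D N < 0 := by
    intro x hx
    have := hx.2
    simp only [hb'] at this
    linarith
  have hne2 : ∀ x ∈ Set.Icc a' b', ∀ k ∈ Icc 2 N, x - D k ≠ 0 := by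
    intro x hx k hk
    simp only [mem_Icc] at hk
    rcases eq_or_lt_of_le hk.2 with h | h
    · rw [h]; exact (hnegN x hx).ne
    · exact (hposk x hx k hk.1 (by omega)).ne'
  have hga' : 0 < g a' := by
    have hmem : a' ∈ Set.Icc a' b' := Set.left_mem_Icc.mpr hab'
    have htN : -2 ≤ (a' - D N)⁻¹ := by
      have ht1 : a' - D N ≤ -(1/2) := by simp only [ha']; linarith
      have ht0 : a' - D N ≠ 0 := by linarith
      have := mul_inv_cancel₀ ht0
      nlinarith [this]
    have hsum1 : (a' - D (N-1))⁻¹ ≤ ∑ k ∈ Icc 2 (N-1), (a' - D k)⁻¹ := by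
      apply Finset.single_le_sum (f := fun k => (a' - D k)⁻¹)
      · intro k hk
        simp only [mem_Icc] at hk
        exact (inv_pos.mpr (hposk a' hmem k hk.1 hk.2)).le
      · simp only [mem_Icc]; omega
    have h1 : a' - D (N-1) = e := by simp [ha']
    rw [h1, he, inv_inv] at hsum1
    simp only [hgdef]
    rw [hsplit]
    simp only [ha'] at *
    linarith
  have hgb' : g b' < 0 := by
    have hmem : b' ∈ Set.Icc a' b' := Set.right_mem_Icc.mpr hab'
    have hsum1 : ∑ k ∈ Icc 2 (N-1), (b' - D k)⁻¹ ≤ (Icc 2 (N-1)).card • (2:ℝ) := by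
      apply Finset.sum_le_card_nsmul
      intro k hk
      simp only [mem_Icc] at hk
      have h1 : (1:ℝ)/2 ≤ b' - D k := by
        have := hDle1 k hk.1 hk.2; simp only [hb']; linarith
      rw [inv_le_comm₀ (by linarith) (by norm_num)]
      linarith
    have hcard : ((Icc 2 (N-1)).card : ℝ) ≤ (N:ℝ) - 2 := by
      rw [Nat.card_Icc]
      have h1 : N - 1 + 1 - 2 = N - 2 := by omega
      rw [h1]
      have h2 : ((N - 2 : ℕ) : ℝ) = (N:ℝ) - 2 := by
        have : (2:ℕ) ≤ N := by omega
        push_cast [this]; ring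
      linarith [h2.le]
    have htN : (b' - D N)⁻¹ = -(4*(N:ℝ)) := by
      have : b' - D N = -δ := by simp [hb']
      rw [this, hδ, inv_neg, inv_inv]
    have hb'pos : 0 < b' := by simp only [hb']; linarith
    rw [nsmul_eq_mul] at hsum1
    simp only [hgdef]
    rw [hsplit]
    rw [htN]
    nlinarith [hsum1, hcard]
  obtain ⟨mu, hmuMem, hgmu⟩ := intermediate_value_Icc' hab' (hcont _ hne2)
    (Set.mem_Icc.mpr ⟨hgb'.le, hga'.le⟩)
  refine ⟨lam, mu, ?_, ?_, ?_, ?_, ?_⟩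
  · have := hlamMem.1; simp only [ha] at this; linarith
  · have := hmuMem.1; simp only [ha'] at this; linarith
  · have := hmuMem.2; simp only [hb'] at this; linarith
  · simp only [hgdef] at hglam; linarith
  · simp only [hgdef] at hgmu; linarith

/-- A root of the secular equation yields an eigenvector of the arrowhead matrix. -/
lemma stmt2_eigvec (n : ℕ) (d : ℕ → ℤ) (hd1 : d 1 = 1)
    (A : Matrix (Fin (2*n+1)) (Fin (2*n+1)) ℤ)
    (hA : ∀ i j : Fin (2 * n + 1), A i j =
      if i = j then d (i.val + 1)
      else if i.val = 0 ∨ j.val = 0 then 1 else 0)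
    (x : ℝ)
    (hne : ∀ k, 2 ≤ k → k ≤ 2*n+1 → x ≠ (d k : ℝ))
    (heq : 1 + ∑ k ∈ Icc 2 (2*n+1), (x - (d k : ℝ))⁻¹ = x) :
    ∃ v : Fin (2*n+1) → ℝ, v ≠ 0 ∧ (A.map (Int.cast : ℤ → ℝ)).mulVec v = x • v := by
  set v : Fin (2*n+1) → ℝ := fun i => if i = 0 then 1 else (x - (d (i.val+1) : ℝ))⁻¹ with hv
  refine ⟨v, ?_, ?_⟩
  · intro h
    have h0 := congrFun h 0
    simp [hv] at h0
  · funext j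
    simp only [Matrix.mulVec, dotProduct, Matrix.map_apply, Pi.smul_apply, smul_eq_mul]
    by_cases hj : j = 0
    · subst hj
      rw [← Finset.add_sum_erase _ _ (mem_univ (0 : Fin (2*n+1)))]
      have h00 : ((A 0 0 : ℤ) : ℝ) * v 0 = 1 := by
        rw [hA]; simp [hv, hd1]
      have hrest : ∑ i ∈ (univ : Finset (Fin (2*n+1))).erase 0, ((A 0 i : ℤ) : ℝ) * v i
          = ∑ k ∈ Icc 2 (2*n+1), (x - (d k : ℝ))⁻¹ := by
        rw [← stmt2_conv_sum (2*n) (fun k => (x - (d k : ℝ))⁻¹)]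
        apply Finset.sum_congr rfl
        intro i hi
        have hi0 : i ≠ 0 := (Finset.mem_erase.mp hi).1
        rw [hA]
        simp [hv, hi0, Ne.symm hi0]
      rw [h00, hrest]
      have : v 0 = 1 := by simp [hv]
      rw [this, mul_one]
      exact heq
    · have hjval : j.val ≠ 0 := fun h => hj (Fin.ext h)
      have hzero : ∀ i ∈ (univ : Finset (Fin (2*n+1))), i ∉ ({0, j} : Finset (Fin (2*n+1))) →
          ((A j i : ℤ) : ℝ) * v i = 0 := by
        intro i _ hi
        simp only [Finset.mem_insert, Finset.mem_singleton, not_or] at hi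
        have hij : j ≠ i := fun h => hi.2 h.symm
        have hival : i.val ≠ 0 := fun h => hi.1 (Fin.ext h)
        rw [hA]
        simp [hij, hjval, hival]
      rw [← Finset.sum_subset (Finset.subset_univ ({0, j} : Finset (Fin (2*n+1)))) hzero,
        Finset.sum_pair (Ne.symm hj)]
      have h1 : ((A j 0 : ℤ) : ℝ) * v 0 = 1 := by
        rw [hA]; simp [hv, hj]
      have h2 : ((A j j : ℤ) : ℝ) * v j = (d (j.val+1) : ℝ) * (x - (d (j.val+1) : ℝ))⁻¹ := by
        rw [hA]; simp [hv, hj]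
      rw [h1, h2]
      have hvj : v j = (x - (d (j.val+1) : ℝ))⁻¹ := by simp [hv, hj]
      rw [hvj]
      have hxne : x - (d (j.val+1) : ℝ) ≠ 0 := by
        have := hne (j.val+1) (by omega) (by omega)
        intro h; apply this; linarith
      field_simp
      ring

/-- The arrowhead matrix `A`, regarded over `ℝ`, has at least two distinct real
eigenvalues strictly greater than 1; consequently the product of the two largest
eigenvalues of `A` is strictly greater than 1. -/
theorem stmt2 (n : ℕ) (hn : 1 ≤ n) (d : ℕ → ℤ)
    (hd1 : d 1 = 1)
    (hdk : ∀ k : ℕ, 2 ≤ k → d k = 1 + ∏ j ∈ Finset.Icc 1 (k - 1), d j)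
    (A : Matrix (Fin (2 * n + 1)) (Fin (2 * n + 1)) ℤ)
    (hA : ∀ i j : Fin (2 * n + 1), A i j =
      if i = j then d (i.val + 1)
      else if i.val = 0 ∨ j.val = 0 then 1 else 0) :
    (∃ lam mu : ℝ, lam ≠ mu ∧ 1 < lam ∧ 1 < mu ∧
      (∃ v : Fin (2 * n + 1) → ℝ, v ≠ 0 ∧
        (A.map (Int.cast : ℤ → ℝ)).mulVec v = lam • v) ∧
      (∃ w : Fin (2 * n + 1) → ℝ, w ≠ 0 ∧
        (A.map (Int.cast : ℤ → ℝ)).mulVec w = mu • w)) ∧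
    ∀ nu₁ nu₂ : ℝ,
      IsGreatest {r : ℝ | ∃ v : Fin (2 * n + 1) → ℝ, v ≠ 0 ∧
        (A.map (Int.cast : ℤ → ℝ)).mulVec v = r • v} nu₁ →
      IsGreatest {r : ℝ | (∃ v : Fin (2 * n + 1) → ℝ, v ≠ 0 ∧
        (A.map (Int.cast : ℤ → ℝ)).mulVec v = r • v) ∧ r ≠ nu₁} nu₂ →
      1 < nu₁ * nu₂ := by
  -- integer facts about d
  have hd2 : d 2 = 2 := by
    have := hdk 2 (le_refl 2)
    simpa [hd1] using this
  have hrec : ∀ k, 2 ≤ k → d (k+1) = 1 + (d k - 1) * d k := by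
    intro k hk
    have h1 := hdk (k+1) (by omega)
    have h2 : k + 1 - 1 = k := by omega
    rw [h2] at h1
    have h3 : k = (k-1) + 1 := by omega
    have h4 : ∏ j ∈ Icc 1 k, d j = (∏ j ∈ Icc 1 (k-1), d j) * d k := by
      rw [h3, Finset.prod_Icc_succ_top (by omega)]
      have h5 : k - 1 + 1 - 1 = k - 1 := by omega
      rw [h5]
    have h6 := hdk k hk
    have h7 : ∏ j ∈ Icc 1 (k-1), d j = d k - 1 := by omega
    rw [h4, h7] at h1
    exact h1
  have hge2 : ∀ k, 2 ≤ k → 2 ≤ d k := by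
    intro k hk
    induction k, hk using Nat.le_induction with
    | base => rw [hd2]
    | succ m hm ih =>
      rw [hrec m hm]
      nlinarith [ih]
  have hlt : ∀ k, 1 ≤ k → d k < d (k+1) := by
    intro k hk
    rcases Nat.lt_or_ge k 2 with h | h
    · interval_cases k
      rw [hd2, hd1]; norm_num
    · rw [hrec k h]
      have := hge2 k h
      nlinarith
  have hmonoZ : ∀ j k, 1 ≤ j → j < k → d j < d k := by
    have key : ∀ k j, 1 ≤ j → j < k → d j < d k := by
      intro k
      induction k with
      | zero => omega
      | succ m ih =>
        intro j hj hjk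
        rcases Nat.lt_or_ge j m with h | h
        · exact lt_trans (ih j hj h) (hlt m (by omega))
        · have h2 : j = m := by omega
          rw [h2]
          exact hlt m (by omega)
    exact fun j k hj hjk => key k j hj hjk
  -- real versions
  have h2R : ∀ k, 2 ≤ k → k ≤ (2*n+1) → (2:ℝ) ≤ ((d k : ℤ) : ℝ) := by
    intro k hk _
    exact_mod_cast hge2 k hk
  have hmonoR : ∀ j k, 2 ≤ j → j < k → k ≤ (2*n+1) → ((d j : ℤ) : ℝ) < ((d k : ℤ) : ℝ) := by
    intro j k hj hjk _
    exact_mod_cast hmonoZ j k (by omega) hjk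
  have hgapR : ((d ((2*n+1)-1) : ℤ) : ℝ) + 1 ≤ ((d (2*n+1) : ℤ) : ℝ) := by
    have h1 : d ((2*n+1)-1) < d (2*n+1) := hmonoZ ((2*n+1)-1) (2*n+1) (by omega) (by omega)
    have h2 : d ((2*n+1)-1) + 1 ≤ d (2*n+1) := h1
    exact_mod_cast h2
  obtain ⟨lam, mu, hlamgt, hmugt, hmult, heqlam, heqmu⟩ :=
    stmt2_aux_roots (2*n+1) (by omega) (fun k => ((d k : ℤ) : ℝ)) h2R hmonoR hgapR
  have hdN2 : (2:ℝ) ≤ ((d (2*n+1) : ℤ) : ℝ) := h2R (2*n+1) (by omega) le_rfl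
  have hdN12 : (2:ℝ) ≤ ((d ((2*n+1)-1) : ℤ) : ℝ) := h2R ((2*n+1)-1) (by omega) (by omega)
  have hlam1 : 1 < lam := by linarith
  have hmu1 : 1 < mu := by linarith
  have hlamne : lam ≠ mu := by linarith
  have hDleN : ∀ k, 2 ≤ k → k ≤ (2*n+1) → ((d k : ℤ) : ℝ) ≤ ((d (2*n+1) : ℤ) : ℝ) := by
    intro k hk2 hk
    rcases eq_or_lt_of_le hk with h | h
    · rw [h]
    · exact (hmonoR k (2*n+1) hk2 h le_rfl).le
  have hnelam : ∀ k, 2 ≤ k → k ≤ (2*n+1) → lam ≠ ((d k : ℤ) : ℝ) := by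
    intro k hk2 hk
    have := hDleN k hk2 hk
    linarith
  have hnemu : ∀ k, 2 ≤ k → k ≤ (2*n+1) → mu ≠ ((d k : ℤ) : ℝ) := by
    intro k hk2 hk
    rcases eq_or_lt_of_le hk with h | h
    · rw [h]; linarith
    · have hle : ((d k : ℤ) : ℝ) ≤ ((d ((2*n+1)-1) : ℤ) : ℝ) := by
        rcases eq_or_lt_of_le (show k ≤ (2*n+1) - 1 by omega) with h' | h'
        · rw [h']
        · exact (hmonoR k ((2*n+1)-1) hk2 h' (by omega)).le
      linarith
  obtain ⟨v, hvne, hveq⟩ := stmt2_eigvec n d hd1 A hA lam hnelam heqlam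
  obtain ⟨w, hwne, hweq⟩ := stmt2_eigvec n d hd1 A hA mu hnemu heqmu
  constructor
  · exact ⟨lam, mu, hlamne, hlam1, hmu1, ⟨v, hvne, hveq⟩, ⟨w, hwne, hweq⟩⟩
  · intro nu₁ nu₂ hg1 hg2
    have hlam_mem : lam ∈ {r : ℝ | ∃ v : Fin (2 * n + 1) → ℝ, v ≠ 0 ∧
        (A.map (Int.cast : ℤ → ℝ)).mulVec v = r • v} := ⟨v, hvne, hveq⟩
    have hmu_mem : mu ∈ {r : ℝ | ∃ v : Fin (2 * n + 1) → ℝ, v ≠ 0 ∧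
        (A.map (Int.cast : ℤ → ℝ)).mulVec v = r • v} := ⟨w, hwne, hweq⟩
    have h1 : lam ≤ nu₁ := hg1.2 hlam_mem
    have h1' : mu ≤ nu₁ := hg1.2 hmu_mem
    have hnu1 : 1 < nu₁ := lt_of_lt_of_le hlam1 h1
    have hnu2 : 1 < nu₂ := by
      by_cases hcase : lam = nu₁
      · have : mu ≠ nu₁ := by rw [← hcase]; exact fun h => hlamne h.symm
        have := hg2.2 ⟨hmu_mem, this⟩
        linarith
      · have := hg2.2 ⟨hlam_mem, hcase⟩
        linarith
    nlinarith
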